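/- arXiv:math/0503114 — 2 statements merged into one kernel-verified Lean document; each statement's English description precedes it below -/
import Mathlib

section
/- For all nonnegative integers m and positive integers n, in \mathbb{Q}(q): ([n][n+1]/q^n)^{m+1} = [2] \sum_{k=0}^{\lfloor m/2 \rfloor} h_{m-2k}(\{1,q\}^{k+1}) \cdot S_{2(m-k)+1,n}(q) \cdot q^{-n(m-k+1)}. -/
open Finset

/-- The `q`-integer `[n] = (1-q^n)/(1-q)` in `ℚ(q)`. -/
noncomputable def qint (n : ℕ) : RatFunc ℚ :=
  (1 - RatFunc.X ^ n) / (1 - RatFunc.X)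

/-- `h_j({1,q}^{k+1})`: the complete homogeneous symmetric polynomial of degree `j`
in `2(k+1)` variables, `k+1` specialized to `q` and `k+1` to `1`. -/
noncomputable def hcomp (j k : ℕ) : RatFunc ℚ :=
  ∑ i ∈ range (j + 1),
    ((k + i).choose k : RatFunc ℚ) * ((j + k - i).choose k : RatFunc ℚ) * RatFunc.X ^ i

/-- `S_{m,n}(q) = ∑_{k=1}^n ([2k]/[2]) [k]^{m-1} q^{((m+1)/2)(n-k)}`. -/
noncomputable def S (m n : ℕ) : RatFunc ℚ :=
  ∑ k ∈ Icc 1 n, (qint (2 * k) / qint 2) * qint k ^ (m - 1) *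
    RatFunc.X ^ ((m + 1) / 2 * (n - k))

/-- coefficient of `X^i` in `hcomp j k`, as a natural number -/
def co (k j i : ℕ) : ℕ := (k + i).choose k * (j + k - i).choose k

lemma hcomp_eq (j k : ℕ) : hcomp j k = ∑ i ∈ range (j + 1), (co k j i : RatFunc ℚ) * RatFunc.X ^ i := by
  unfold hcomp co
  refine sum_congr rfl fun i _ => ?_
  push_cast
  ring

lemma co_eq_zero {k j i : ℕ} (h : j < i) : co (k+1) j i = 0 := by
  unfold co
  have : j + (k+1) - i < k + 1 := by omega
  simp [Nat.choose_eq_zero_of_lt this]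

lemma hcomp_extend (j k M : ℕ) (h : j + 1 ≤ M) :
    hcomp j (k+1) = ∑ i ∈ range M, (co (k+1) j i : RatFunc ℚ) * RatFunc.X ^ i := by
  rw [hcomp_eq]
  refine sum_subset (by simpa using h) fun i _ hi => ?_
  rw [co_eq_zero (by simpa using hi)]
  simp

lemma hcomp_zero (k : ℕ) : hcomp 0 k = 1 := by
  simp [hcomp]

lemma hcomp_one (k : ℕ) : hcomp 1 k = ((k:RatFunc ℚ)+1) * (1 + RatFunc.X) := by
  simp [hcomp_eq, Finset.sum_range_succ, co, Nat.add_comm 1, Nat.choose_succ_self_right]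
  push_cast
  ring

lemma hcomp_k_zero (j : ℕ) : hcomp j 0 = ∑ i ∈ range (j+1), RatFunc.X ^ i := by
  simp [hcomp_eq, co]

lemma co_key (k j i' d : ℕ) (hd : i' + d = j + 1) :
    co (k+1) (j+2) (i'+1) + co (k+1) j i' =
      co (k+1) (j+1) (i'+1) + co (k+1) (j+1) i' + co k (j+2) (i'+1) := by
  unfold co
  have e1 : j+2+(k+1)-(i'+1) = d+k+1 := by omega
  have e2 : j+(k+1)-i' = d+k := by omega
  have e3 : (j+1)+(k+1)-(i'+1) = d+k := by omega
  have e4 : (j+1)+(k+1)-i' = d+k+1 := by omega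
  have e5 : (j+2)+k-(i'+1) = d+k := by omega
  have e6 : k+1+(i'+1) = (k+i'+1)+1 := by omega
  have e8 : k+1+i' = k+i'+1 := by omega
  have e9 : k+(i'+1) = k+i'+1 := by omega
  rw [e1, e2, e3, e4, e5, e6, e8, e9,
    Nat.choose_succ_succ (k+i'+1) k,
    show d+k+1 = (d+k)+1 from rfl, Nat.choose_succ_succ (d+k) k]
  ring

lemma co_key0 (k j : ℕ) : co (k+1) (j+2) 0 = co (k+1) (j+1) 0 + co k (j+2) 0 := by
  unfold co
  have e1 : j+2+(k+1)-0 = (j+k+2)+1 := by omega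
  have e2 : j+1+(k+1)-0 = j+k+2 := by omega
  have e3 : j+2+k-0 = j+k+2 := by omega
  rw [e1, e2, e3, Nat.choose_succ_succ (j+k+2) k]
  simp [Nat.choose_self]
  ring

lemma shift_sum (c : ℕ → RatFunc ℚ) (M : ℕ) :
    RatFunc.X * (∑ i ∈ range M, c i * RatFunc.X ^ i)
      = ∑ i ∈ range (M+1), (if i = 0 then (0:RatFunc ℚ) else c (i-1)) * RatFunc.X ^ i := by
  rw [Finset.mul_sum, Finset.sum_range_succ']
  simp only [if_true, if_false, ite_true, ite_false, zero_mul, add_zero]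
  refine sum_congr rfl fun i _ => ?_
  rw [if_neg (by omega : ¬ (i+1 = 0)), show i+1-1 = i from by omega]
  ring

lemma hcomp_rec (j k : ℕ) :
    hcomp (j+2) (k+1) + RatFunc.X * hcomp j (k+1)
      = hcomp (j+1) (k+1) + RatFunc.X * hcomp (j+1) (k+1) + hcomp (j+2) k := by
  rw [hcomp_extend j k (j+2) (by omega), hcomp_extend (j+1) k (j+2) (by omega)]
  rw [shift_sum _ (j+2), shift_sum _ (j+2)]
  rw [← hcomp_extend (j+1) k (j+2) (by omega), hcomp_extend (j+1) k (j+2+1) (by omega)]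
  rw [hcomp_eq (j+2) (k+1), hcomp_eq (j+2) k]
  rw [← Finset.sum_add_distrib, ← Finset.sum_add_distrib, ← Finset.sum_add_distrib]
  refine sum_congr rfl fun i hi => ?_
  rcases i with _ | i'
  · simp only [if_pos rfl, zero_mul, add_zero, pow_zero, mul_one]
    have := co_key0 k j
    exact_mod_cast congrArg (fun n : ℕ => (n : RatFunc ℚ)) this
  · simp only [if_neg (Nat.succ_ne_zero i'), Nat.succ_sub_one]
    have hi' : i' + 1 < j + 3 := mem_range.mp hi
    obtain ⟨d, hd⟩ : ∃ d, i' + d = j + 1 := ⟨j+1-i', by omega⟩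
    have key := co_key k j i' d hd
    have key' : ((co (k+1) (j+2) (i'+1) : RatFunc ℚ)) + co (k+1) j i' =
        co (k+1) (j+1) (i'+1) + co (k+1) (j+1) i' + co k (j+2) (i'+1) := by
      exact_mod_cast congrArg (fun n : ℕ => (n : RatFunc ℚ)) key
    linear_combination key' * RatFunc.X^(i'+1)

lemma hcomp_one_rec (k : ℕ) :
    hcomp 1 (k+1) = (1+RatFunc.X) * hcomp 0 (k+1) + hcomp 1 k := by
  rw [hcomp_one, hcomp_one, hcomp_zero]
  push_cast
  ring

lemma hcomp_zero_rec (m : ℕ) :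
    hcomp (m+2) 0 + RatFunc.X * hcomp m 0 = hcomp (m+1) 0 + RatFunc.X * hcomp (m+1) 0 := by
  have h : ∀ j : ℕ, hcomp (j+1) 0 = RatFunc.X * hcomp j 0 + 1 := by
    intro j
    rw [hcomp_k_zero, hcomp_k_zero, geom_sum_succ]
  rw [show m+2 = (m+1)+1 from rfl, h (m+1), h m]
  ring

lemma Hrec (x y : RatFunc ℚ) (m : ℕ) :
    ∑ i ∈ range (m+3), x^i * y^(m+2-i) + x*y * ∑ i ∈ range (m+1), x^i * y^(m-i)
      = (x+y) * ∑ i ∈ range (m+2), x^i * y^(m+1-i) := by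
  have h1 : ∑ i ∈ range (m+3), x^i * y^(m+2-i)
      = ∑ i ∈ range (m+2), x^i * y^(m+2-i) + x^(m+2) := by
    rw [Finset.sum_range_succ, Nat.sub_self, pow_zero, mul_one]
  have h2 : ∑ i ∈ range (m+2), x^i * y^(m+2-i)
      = y * ∑ i ∈ range (m+2), x^i * y^(m+1-i) := by
    rw [Finset.mul_sum]
    refine sum_congr rfl fun i hi => ?_
    have hi' := mem_range.mp hi
    rw [show m+2-i = (m+1-i)+1 from by omega, pow_succ]
    ring
  have h3 : x * ∑ i ∈ range (m+2), x^i * y^(m+1-i)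
      = ∑ i ∈ range (m+1), x^(i+1) * y^(m+1-i) + x^(m+2) := by
    rw [Finset.mul_sum, Finset.sum_range_succ, Nat.sub_self, pow_zero, mul_one, ← pow_succ']
    refine congrArg₂ _ (sum_congr rfl fun i hi => by ring) rfl
  have h4 : ∑ i ∈ range (m+1), x^(i+1) * y^(m+1-i)
      = x*y * ∑ i ∈ range (m+1), x^i * y^(m-i) := by
    rw [Finset.mul_sum]
    refine sum_congr rfl fun i hi => ?_
    have hi' := mem_range.mp hi
    rw [show m+1-i = (m-i)+1 from by omega, pow_succ, pow_succ]
    ring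
  rw [h1, h2, add_mul, h3, h4]
  ring

lemma sum_guard (m M : ℕ) (h : m/2 + 1 ≤ M) (f : ℕ → RatFunc ℚ) :
    ∑ k ∈ range (m/2+1), f k = ∑ k ∈ range M, if 2*k ≤ m then f k else 0 := by
  have hsub : range (m/2+1) ⊆ range M := by rw [range_subset_range]; exact h
  rw [show (∑ k ∈ range (m/2+1), f k)
      = ∑ k ∈ range (m/2+1), (if 2*k ≤ m then f k else 0) from
    sum_congr rfl fun k hk => (if_pos (by have := mem_range.mp hk; omega)).symm]
  exact Finset.sum_subset hsub (fun k _ hk =>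
    if_neg (by simp only [mem_range, not_lt] at hk; omega))

lemma Rrec (t : RatFunc ℚ) (m : ℕ) :
    ∑ k ∈ range ((m+2)/2+1), hcomp (m+2-2*k) k * t^(m+2-k)
      + RatFunc.X * t^2 * ∑ k ∈ range (m/2+1), hcomp (m-2*k) k * t^(m-k)
    = (1+RatFunc.X) * t * ∑ k ∈ range ((m+1)/2+1), hcomp (m+1-2*k) k * t^(m+1-k)
      + t * ∑ k ∈ range (m/2+1), hcomp (m-2*k) k * t^(m-k) := by
  have hshift : t * ∑ k ∈ range (m/2+1), hcomp (m-2*k) k * t^(m-k)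
      = ∑ k ∈ range (m/2+1+1),
          (if 1 ≤ k ∧ 2*(k-1) ≤ m then hcomp (m+2-2*k) (k-1) * t^(m+2-k) else 0) := by
    rw [Finset.sum_range_succ' _ (m/2+1)]
    simp only [Nat.add_sub_cancel, show ¬((1:ℕ) ≤ 0 ∧ 2*(0-1) ≤ m) from by omega, if_neg,
      not_false_iff, add_zero]
    rw [Finset.mul_sum]
    refine sum_congr rfl fun k hk => ?_
    have hk' := mem_range.mp hk
    rw [if_pos (⟨by omega, by omega⟩ : 1 ≤ k+1 ∧ 2*k ≤ m)]
    rw [show m+2-2*(k+1) = m-2*k from by omega, show m+2-(k+1) = (m-k)+1 from by omega,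
      pow_succ]
    ring
  rw [hshift]
  rw [sum_guard (m+2) (m/2+1+1) (by omega), sum_guard (m+1) (m/2+1+1) (by omega),
    sum_guard m (m/2+1+1) (by omega), Finset.mul_sum, Finset.mul_sum,
    ← Finset.sum_add_distrib, ← Finset.sum_add_distrib]
  refine sum_congr rfl fun k hk => ?_
  have hk' := mem_range.mp hk
  rcases Nat.lt_or_ge m (2*k) with hcase | hcase
  · -- 2k > m : cases 2k = m+1, 2k = m+2 (i.e. k = m/2+1 and parity)
    rcases Nat.lt_or_ge (m+1) (2*k) with hc2 | hc2
    · -- 2k = m+2 exactly (since k ≤ m/2+1)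
      have h2k : 2*k = m+2 := by omega
      rw [if_pos (by omega), if_neg (by omega), if_neg (by omega),
        if_pos (by omega : 1 ≤ k ∧ 2*(k-1) ≤ m)]
      rw [show m+2-2*k = 0 from by omega, hcomp_zero, hcomp_zero]
      ring
    · -- 2k = m+1
      have h2k : 2*k = m+1 := by omega
      obtain ⟨k', rfl⟩ : ∃ k', k = k'+1 := ⟨k-1, by omega⟩
      rw [if_pos (by omega), if_neg (by omega), if_pos (by omega),
        if_pos (by omega : 1 ≤ k'+1 ∧ 2*(k'+1-1) ≤ m)]
      rw [show m+2-2*(k'+1) = 1 from by omega, show m+1-2*(k'+1) = 0 from by omega,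
        Nat.add_sub_cancel, show m+1-(k'+1) = (m+2-(k'+1))-1 from by omega]
      have he : m+2-(k'+1) = (m+1-(k'+1))+1 := by omega
      rw [show (m+2-(k'+1))-1 = m+1-(k'+1) from by omega, he, pow_succ]
      linear_combination (hcomp_one_rec k') * t^((m+1-(k'+1))+1)
  · -- 2k ≤ m
    rw [if_pos (by omega), if_pos hcase, if_pos (by omega)]
    rcases Nat.eq_zero_or_pos k with rfl | hkpos
    · rw [if_neg (by omega)]
      simp only [Nat.mul_zero, Nat.sub_zero]
      linear_combination (hcomp_zero_rec m) * (t^m * t^2)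
    · obtain ⟨k', rfl⟩ : ∃ k', k = k'+1 := ⟨k-1, by omega⟩
      rw [if_pos (by omega : 1 ≤ k'+1 ∧ 2*(k'+1-1) ≤ m)]
      have hj : ∃ j, m-2*(k'+1) = j := ⟨_, rfl⟩
      obtain ⟨j, hjeq⟩ := hj
      rw [show m+2-2*(k'+1) = j+2 from by omega, show m+1-2*(k'+1) = j+1 from by omega,
        hjeq, Nat.add_sub_cancel]
      have e1 : t^(m+2-(k'+1)) = t^(m-(k'+1)) * t^2 := by rw [← pow_add]; congr 1; omega
      have e2 : t^(m+1-(k'+1)) = t^(m-(k'+1)) * t := by rw [← pow_succ]; congr 1; omega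
      rw [e1, e2]
      linear_combination (hcomp_rec j k') * (t^(m-(k'+1)) * t^2)

lemma lemA (t x y : RatFunc ℚ) (hs : x + y = (1+RatFunc.X)*t)
    (hp : x*y = t*(RatFunc.X*t-1)) (m : ℕ) :
    ∑ i ∈ range (m+1), x^i * y^(m-i) = ∑ k ∈ range (m/2+1), hcomp (m-2*k) k * t^(m-k) := by
  suffices h : ∀ m : ℕ,
      (∑ i ∈ range (m+1), x^i * y^(m-i) = ∑ k ∈ range (m/2+1), hcomp (m-2*k) k * t^(m-k)) ∧
      (∑ i ∈ range (m+2), x^i * y^(m+1-i) = ∑ k ∈ range ((m+1)/2+1), hcomp (m+1-2*k) k * t^(m+1-k)) by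
    exact (h m).1
  intro m
  induction m with
  | zero =>
    constructor
    · simp [hcomp_zero]
    · simp only [Nat.reduceAdd, Nat.reduceDiv]
      rw [Finset.sum_range_succ, Finset.sum_range_succ, Finset.sum_range_succ]
      simp [hcomp_one]
      linear_combination hs
  | succ m ih =>
    refine ⟨ih.2, ?_⟩
    have h1 := Hrec x y m
    rw [ih.1, ih.2, hs, hp] at h1
    have h2 := Rrec t m
    have hd1 : (m+1+1)/2 = (m+2)/2 := by omega
    have hd2 : ∀ P : Prop, P → P := fun _ p => p
    rw [show m+1+1 = m+2 from rfl]
    linear_combination h1 - h2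

lemma one_sub_X_ne : (1 : RatFunc ℚ) - RatFunc.X ≠ 0 := by
  rw [← RatFunc.algebraMap_X (K := ℚ), ← map_one (algebraMap (Polynomial ℚ) (RatFunc ℚ)),
    ← map_sub]
  exact RatFunc.algebraMap_ne_zero (by intro h; simpa using congrArg (Polynomial.eval (0:ℚ)) h)

lemma one_add_X_ne : (1 : RatFunc ℚ) + RatFunc.X ≠ 0 := by
  rw [← RatFunc.algebraMap_X (K := ℚ), ← map_one (algebraMap (Polynomial ℚ) (RatFunc ℚ)),
    ← map_add]
  exact RatFunc.algebraMap_ne_zero (by intro h; simpa using congrArg (Polynomial.eval (0:ℚ)) h)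

lemma qint_two : qint 2 = 1 + RatFunc.X := by
  rw [qint, div_eq_iff one_sub_X_ne]
  ring

lemma qint_two_ne : qint 2 ≠ 0 := by
  rw [qint_two]; exact one_add_X_ne

lemma Xpow_ne (n : ℕ) : (RatFunc.X : RatFunc ℚ)^n ≠ 0 := pow_ne_zero n RatFunc.X_ne_zero

-- key q-integer identities for the telescoping step
lemma L1 (n : ℕ) :
    qint (n+1) * qint (n+2) / RatFunc.X^(n+1) - qint n * qint (n+1) / RatFunc.X^n
      = qint (2*(n+1)) / RatFunc.X^(n+1) := by
  have h1 := one_sub_X_ne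
  have h2 : (RatFunc.X : RatFunc ℚ) ≠ 0 := RatFunc.X_ne_zero
  have h3 : (RatFunc.X : RatFunc ℚ)^n ≠ 0 := pow_ne_zero _ h2
  unfold qint
  field_simp
  ring

lemma L2 (n : ℕ) :
    qint (n+1) * qint (n+2) / RatFunc.X^(n+1) + qint n * qint (n+1) / RatFunc.X^n
      = (1+RatFunc.X) * (qint (n+1)^2 / RatFunc.X^(n+1)) := by
  have h1 := one_sub_X_ne
  have h2 : (RatFunc.X : RatFunc ℚ) ≠ 0 := RatFunc.X_ne_zero
  have h3 : (RatFunc.X : RatFunc ℚ)^n ≠ 0 := pow_ne_zero _ h2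
  unfold qint
  field_simp
  ring

lemma L3 (n : ℕ) :
    (qint (n+1) * qint (n+2) / RatFunc.X^(n+1)) * (qint n * qint (n+1) / RatFunc.X^n)
      = (qint (n+1)^2 / RatFunc.X^(n+1)) *
          (RatFunc.X * (qint (n+1)^2 / RatFunc.X^(n+1)) - 1) := by
  have h1 := one_sub_X_ne
  have h2 : (RatFunc.X : RatFunc ℚ) ≠ 0 := RatFunc.X_ne_zero
  have h3 : (RatFunc.X : RatFunc ℚ)^n ≠ 0 := pow_ne_zero _ h2
  unfold qint
  field_simp
  ring

lemma S_zero (M : ℕ) : S M 0 = 0 := by simp [S]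

lemma S_step (M n : ℕ) :
    S M (n+1) = RatFunc.X^((M+1)/2) * S M n
      + (qint (2*(n+1)) / qint 2) * qint (n+1)^(M-1) := by
  unfold S
  rw [Finset.sum_Icc_succ_top (by omega : 1 ≤ n+1), Finset.mul_sum]
  congr 1
  · refine sum_congr rfl fun j hj => ?_
    have hj' := mem_Icc.mp hj
    rw [show n+1-j = (n-j)+1 from by omega, Nat.mul_add, Nat.mul_one, pow_add]
    ring
  · rw [Nat.sub_self, Nat.mul_zero, pow_zero, mul_one]

lemma main (m n : ℕ) :
    (qint n * qint (n + 1) / RatFunc.X ^ n) ^ (m + 1) =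
      qint 2 * ∑ k ∈ range (m / 2 + 1),
          hcomp (m - 2 * k) k * S (2 * (m - k) + 1) n *
            (RatFunc.X ^ (n * (m - k + 1)))⁻¹ := by
  induction n with
  | zero =>
    have h0 : qint 0 = 0 := by simp [qint]
    simp [h0, S_zero]
  | succ n ih =>
    set x := qint (n+1) * qint (n+2) / RatFunc.X^(n+1) with hxdef
    set y := qint n * qint (n+1) / RatFunc.X^n with hydef
    set t := qint (n+1)^2 / RatFunc.X^(n+1) with htdef
    have key := lemA t x y (L2 n) (L3 n) m
    have gs := geom_sum₂_mul x y (m+1)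
    simp only [Nat.add_sub_cancel] at gs
    have expand : ∀ k ∈ range (m/2+1),
        hcomp (m-2*k) k * S (2*(m-k)+1) (n+1) * (RatFunc.X^((n+1)*(m-k+1)))⁻¹
        = hcomp (m-2*k) k * S (2*(m-k)+1) n * (RatFunc.X^(n*(m-k+1)))⁻¹
          + (qint (2*(n+1)) / qint 2) * (hcomp (m-2*k) k * t^(m-k)) / RatFunc.X^(n+1) := by
      intro k hk
      have hk' : k ≤ m/2 := by have := mem_range.mp hk; omega
      rw [S_step, show (2*(m-k)+1+1)/2 = m-k+1 from by omega,
        show 2*(m-k)+1-1 = 2*(m-k) from by omega]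
      have hnz1 : (RatFunc.X : RatFunc ℚ)^((n+1)*(m-k+1)) ≠ 0 := Xpow_ne _
      have hnz2 : (RatFunc.X : RatFunc ℚ)^(n*(m-k+1)) ≠ 0 := Xpow_ne _
      have hnz3 : (RatFunc.X : RatFunc ℚ)^(n+1) ≠ 0 := Xpow_ne _
      have hq2 := qint_two_ne
      have hsplit : (RatFunc.X : RatFunc ℚ)^((n+1)*(m-k+1))
          = RatFunc.X^(n*(m-k+1)) * RatFunc.X^(m-k+1) := by
        rw [← pow_add]; congr 1; ring
      have htpow : t^(m-k) = qint (n+1)^(2*(m-k)) / RatFunc.X^((n+1)*(m-k)) := by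
        rw [htdef, div_pow, ← pow_mul, ← pow_mul]
      rw [hsplit, htpow]
      have hnz4 : (RatFunc.X : RatFunc ℚ)^(m-k+1) ≠ 0 := Xpow_ne _
      have hnz5 : (RatFunc.X : RatFunc ℚ)^((n+1)*(m-k)) ≠ 0 := Xpow_ne _
      have hsplit2 : (RatFunc.X : RatFunc ℚ)^(n*(m-k+1)) * RatFunc.X^(m-k+1)
          = RatFunc.X^((n+1)*(m-k)) * RatFunc.X^(n+1) := by
        rw [← pow_add, ← pow_add]; congr 1; ring
      field_simp
      linear_combination (-(hcomp (m-2*k) k * qint (2*(n+1)) * qint (n+1)^(2*(m-k)))) * hsplit2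
    rw [Finset.sum_congr rfl expand, Finset.sum_add_distrib, mul_add, ← ih]
    -- goal: x^(m+1) = y^(m+1) + qint 2 * Σ (second terms)
    have hsum2 : qint 2 * ∑ k ∈ range (m/2+1),
        (qint (2*(n+1)) / qint 2) * (hcomp (m-2*k) k * t^(m-k)) / RatFunc.X^(n+1)
        = (qint (2*(n+1)) / RatFunc.X^(n+1)) * ∑ k ∈ range (m/2+1), hcomp (m-2*k) k * t^(m-k) := by
      rw [Finset.mul_sum, Finset.mul_sum]
      refine sum_congr rfl fun k hk => ?_
      have hq2 := qint_two_ne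
      have hnz3 : (RatFunc.X : RatFunc ℚ)^(n+1) ≠ 0 := Xpow_ne _
      field_simp
    rw [hsum2, ← key, ← L1 n]
    linear_combination -gs

theorem stmt4 (m n : ℕ) (hn : 1 ≤ n) :
    (qint n * qint (n + 1) / RatFunc.X ^ n) ^ (m + 1) =
      qint 2 * ∑ k ∈ range (m / 2 + 1),
          hcomp (m - 2 * k) k * S (2 * (m - k) + 1) n *
            RatFunc.X ^ (-((n : ℤ) * ((m : ℤ) - k + 1))) := by
  rw [main m n]
  congr 1
  refine sum_congr rfl fun k hk => ?_
  have hk' : k ≤ m := by have := mem_range.mp hk; omega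
  congr 1
  have hc : ((n*(m-k+1) : ℕ) : ℤ) = (n:ℤ) * ((m:ℤ) - k + 1) := by
    push_cast [Nat.cast_sub hk']
    ring
  rw [show (-((n:ℤ) * ((m:ℤ) - (k:ℤ) + 1))) = -((n*(m-k+1) : ℕ) : ℤ) from by rw [hc],
    zpow_neg, zpow_natCast]
end

section
/- For nonnegative integers k \le m and r, the hypergeometric-type sum \sum_{i} \binom{k+i}{k}\binom{m-k-i}{k}\binom{2k+1}{r-i}(-1)^{r-i} (over all i with 0 \le i \le m-2k) equals (-1)^r \binom{m-k}{k}\binom{2k+1}{r} \cdot {}_3F_2(-r, 1+k, 2k-m; k-m, 2+2k-r; 1), and by the Pfaff–Saalschütz summation this equals (-1)^{r+m}\binom{m+1}{r}\binom{r-k-1}{m-2k}. -/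
open Finset

/-- Generalized binomial coefficient for integer arguments:
`ichoose a b = a (a-1) ⋯ (a-b+1) / b!` for `b ≥ 0`, and `0` for `b < 0`. -/
def ichoose (a b : ℤ) : ℤ :=
  if b < 0 then 0
  else if 0 ≤ a then (a.toNat.choose b.toNat : ℤ)
  else (-1) ^ b.toNat * ((b - 1 - a).toNat.choose b.toNat : ℤ)

lemma ichoose_of_neg {a b : ℤ} (h : b < 0) : ichoose a b = 0 := by
  simp [ichoose, h]

lemma ichoose_zero (a : ℤ) : ichoose a 0 = 1 := by
  rcases le_or_gt 0 a with h | h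
  · simp [ichoose, h]
  · simp [ichoose, not_le.mpr h]

lemma ichoose_natCast (n : ℕ) (b : ℕ) : ichoose (n : ℤ) (b : ℤ) = (n.choose b : ℤ) := by
  simp [ichoose, Int.toNat_natCast]

lemma ichoose_eq_zero {a b : ℤ} (h1 : 0 ≤ a) (h2 : a < b) : ichoose a b = 0 := by
  have hb : ¬ b < 0 := by omega
  simp only [ichoose, if_neg hb, if_pos h1]
  rw [Nat.choose_eq_zero_of_lt (by omega)]
  simp

lemma fact_mul_ichoose (a : ℤ) (b : ℕ) :
    (b.factorial : ℤ) * ichoose a b = (descPochhammer ℤ b).eval a := by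
  rcases le_or_gt 0 a with h | h
  · obtain ⟨n, rfl⟩ : ∃ n : ℕ, a = (n : ℤ) := ⟨a.toNat, (Int.toNat_of_nonneg h).symm⟩
    rw [ichoose_natCast, descPochhammer_eval_eq_descFactorial,
      Nat.descFactorial_eq_factorial_mul_choose]
    push_cast; ring
  · obtain ⟨n, rfl⟩ : ∃ n : ℕ, a = -(n+1 : ℤ) := ⟨(-a-1).toNat, by omega⟩
    have hb : ¬ (b : ℤ) < 0 := by omega
    have hneg : ¬ (0:ℤ) ≤ -(n+1 : ℤ) := by omega
    have harg : ((b : ℤ) - 1 - (-(n+1))).toNat = b + n := by omega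
    rw [ichoose, if_neg hb, if_neg hneg, harg]
    have htn : ((b : ℤ)).toNat = b := by omega
    rw [htn]
    have heval : (descPochhammer ℤ b).eval (-(n+1) : ℤ)
        = (-1)^b * ((b+n).descFactorial b : ℤ) := by
      rw [descPochhammer_eval_eq_ascPochhammer]
      have : (-(n+1) : ℤ) - b + 1 = -(((n+b : ℕ)) : ℤ) := by push_cast; ring
      rw [this, ascPochhammer_eval_neg_eq_descPochhammer]
      have : (((n+b : ℕ)) : ℤ) = ((n+b : ℕ) : ℤ) := rfl
      rw [descPochhammer_eval_eq_descFactorial]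
      norm_num [Nat.add_comm n b]
    rw [heval, Nat.descFactorial_eq_factorial_mul_choose]
    push_cast; ring

lemma ichoose_absorb (a : ℤ) (b : ℕ) :
    ((b : ℤ) + 1) * ichoose a ((b : ℤ) + 1) = (a - b) * ichoose a b := by
  have h1 := fact_mul_ichoose a b
  have h2 := fact_mul_ichoose a (b+1)
  rw [descPochhammer_succ_eval, ← h1] at h2
  have hfac : ((b+1).factorial : ℤ) = ((b:ℤ)+1) * (b.factorial : ℤ) := by
    rw [Nat.factorial_succ]; push_cast; ring
  have hcast : ((b+1 : ℕ) : ℤ) = (b : ℤ) + 1 := by push_cast; ring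
  rw [hcast] at h2
  have := mul_left_cancel₀ (a := (b.factorial : ℤ))
    (by exact_mod_cast Nat.factorial_ne_zero b)
    (by rw [hfac] at h2; linarith [h2] : (b.factorial : ℤ) * (((b:ℤ)+1) * ichoose a ((b:ℤ)+1))
        = (b.factorial : ℤ) * ((a - b) * ichoose a b))
  exact this

lemma ichoose_absorb' (a c : ℤ) :
    c * ichoose a c = (a - c + 1) * ichoose a (c - 1) := by
  rcases le_or_gt c 0 with h | h
  · rcases lt_or_eq_of_le h with h' | h'
    · rw [ichoose_of_neg h', ichoose_of_neg (by omega)]; ring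
    · subst h'; rw [ichoose_of_neg (by omega : (0:ℤ) - 1 < 0)]; ring
  · obtain ⟨b, rfl⟩ : ∃ b : ℕ, c = (b : ℤ) + 1 := ⟨(c-1).toNat, by omega⟩
    have := ichoose_absorb a b
    rw [add_sub_cancel_right]
    rw [this]; ring

lemma ichoose_shift (a : ℤ) (b : ℕ) :
    (a - b) * ichoose a b = a * ichoose (a - 1) b := by
  have h1 := fact_mul_ichoose a b
  have h2 := fact_mul_ichoose (a-1) b
  have key : (descPochhammer ℤ b).eval a * (a - b) = a * (descPochhammer ℤ b).eval (a - 1) := by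
    have e1 := descPochhammer_succ_eval (S := ℤ) b a
    have e2 : (descPochhammer ℤ (b+1)).eval a = a * (descPochhammer ℤ b).eval (a-1) := by
      rw [descPochhammer_succ_left]
      simp [Polynomial.eval_comp]
    rw [← e1, e2]
  have : (b.factorial : ℤ) * ((a - b) * ichoose a b)
      = (b.factorial : ℤ) * (a * ichoose (a-1) b) := by
    calc (b.factorial : ℤ) * ((a - b) * ichoose a b)
        = ((b.factorial : ℤ) * ichoose a b) * (a - b) := by ring
      _ = (descPochhammer ℤ b).eval a * (a - b) := by rw [h1]
      _ = a * (descPochhammer ℤ b).eval (a-1) := key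
      _ = a * ((b.factorial : ℤ) * ichoose (a-1) b) := by rw [← h2]
      _ = (b.factorial : ℤ) * (a * ichoose (a-1) b) := by ring
  exact mul_left_cancel₀ (by exact_mod_cast Nat.factorial_ne_zero b) this

def Fi (k r m i : ℕ) : ℤ :=
  ichoose ((k:ℤ)+i) (k:ℤ) * ichoose ((m:ℤ)-k-i) (k:ℤ)
    * ichoose (2*(k:ℤ)+1) ((r:ℤ)-i) * (-1)^(r+i)

lemma cert (k r m i : ℕ) :
    ((m:ℤ)+2-r) * ((m:ℤ)-2*k+1) * Fi k r (m+1) i + ((m:ℤ)+2) * ((r:ℤ)+k-m-1) * Fi k r m i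
    = ((i:ℤ)+1) * ((r:ℤ)-2*k-2-i) * Fi k r (m+1) (i+1)
      - (i:ℤ) * ((r:ℤ)-2*k-1-i) * Fi k r (m+1) i := by
  have hR1 : ((i:ℤ)+1) * ichoose ((k:ℤ)+(i:ℤ)+1) (k:ℤ)
      = ((k:ℤ)+(i:ℤ)+1) * ichoose ((k:ℤ)+(i:ℤ)) (k:ℤ) := by
    have h := ichoose_shift ((k:ℤ)+(i:ℤ)+1) k
    rw [show (k:ℤ)+(i:ℤ)+1-(k:ℤ) = (i:ℤ)+1 from by ring,
        show (k:ℤ)+(i:ℤ)+1-1 = (k:ℤ)+(i:ℤ) from by ring] at h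
    exact h
  have hR2 : ((m:ℤ)+1-2*(k:ℤ)-(i:ℤ)) * ichoose ((m:ℤ)+1-(k:ℤ)-(i:ℤ)) (k:ℤ)
      = ((m:ℤ)+1-(k:ℤ)-(i:ℤ)) * ichoose ((m:ℤ)-(k:ℤ)-(i:ℤ)) (k:ℤ) := by
    have h := ichoose_shift ((m:ℤ)+1-(k:ℤ)-(i:ℤ)) k
    rw [show (m:ℤ)+1-(k:ℤ)-(i:ℤ)-(k:ℤ) = (m:ℤ)+1-2*(k:ℤ)-(i:ℤ) from by ring,
        show (m:ℤ)+1-(k:ℤ)-(i:ℤ)-1 = (m:ℤ)-(k:ℤ)-(i:ℤ) from by ring] at h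
    exact h
  have hR3 : ((r:ℤ)-(i:ℤ)) * ichoose (2*(k:ℤ)+1) ((r:ℤ)-(i:ℤ))
      = (2*(k:ℤ)+2-(r:ℤ)+(i:ℤ)) * ichoose (2*(k:ℤ)+1) ((r:ℤ)-(i:ℤ)-1) := by
    have h := ichoose_absorb' (2*(k:ℤ)+1) ((r:ℤ)-(i:ℤ))
    rw [show 2*(k:ℤ)+1-((r:ℤ)-(i:ℤ))+1 = 2*(k:ℤ)+2-(r:ℤ)+(i:ℤ) from by ring] at h
    exact h
  simp only [Fi]
  push_cast
  rw [show (k:ℤ) + ((i:ℤ)+1) = (k:ℤ)+(i:ℤ)+1 from by ring,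
      show (m:ℤ)+1-(k:ℤ)-((i:ℤ)+1) = (m:ℤ)-(k:ℤ)-(i:ℤ) from by ring,
      show (r:ℤ)-((i:ℤ)+1) = (r:ℤ)-(i:ℤ)-1 from by ring,
      show r+(i+1) = (r+i)+1 from by ring, pow_succ]
  by_cases hA : (r:ℤ) = 2*(k:ℤ)+2+(i:ℤ)
  · have hC : ichoose (2*(k:ℤ)+1) ((r:ℤ)-(i:ℤ)) = 0 := by
      rw [show (r:ℤ)-(i:ℤ) = 2*(k:ℤ)+2 from by rw [hA]; ring]
      exact ichoose_eq_zero (by positivity) (by linarith)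
    linear_combination
      (((m:ℤ)+2-r) * ((m:ℤ)-2*k+1) * ichoose ((k:ℤ)+(i:ℤ)) (k:ℤ)
          * ichoose ((m:ℤ)+1-(k:ℤ)-(i:ℤ)) (k:ℤ) * (-1:ℤ)^(r+i)
        + ((m:ℤ)+2) * ((r:ℤ)+k-m-1) * ichoose ((k:ℤ)+(i:ℤ)) (k:ℤ)
          * ichoose ((m:ℤ)-(k:ℤ)-(i:ℤ)) (k:ℤ) * (-1:ℤ)^(r+i)
        + (i:ℤ) * ((r:ℤ)-2*k-1-i) * ichoose ((k:ℤ)+(i:ℤ)) (k:ℤ)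
          * ichoose ((m:ℤ)+1-(k:ℤ)-(i:ℤ)) (k:ℤ) * (-1:ℤ)^(r+i)) * hC
      + (((i:ℤ)+1) * ichoose ((k:ℤ)+(i:ℤ)+1) (k:ℤ) * ichoose ((m:ℤ)-(k:ℤ)-(i:ℤ)) (k:ℤ)
          * ichoose (2*(k:ℤ)+1) ((r:ℤ)-(i:ℤ)-1) * (-1:ℤ)^(r+i)) * hA
  · by_cases hB : (m:ℤ)+1-2*(k:ℤ)-(i:ℤ) = 0
    · rcases Nat.eq_zero_or_pos k with hk | hk
      · subst hk
        norm_num at hR3 hA hB ⊢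
        simp only [ichoose_zero, one_mul, mul_one]
        apply mul_left_cancel₀ (a := (2:ℤ)-(r:ℤ)+(i:ℤ))
          (by intro hc; exact hA (by linarith))
        linear_combination (-(((i:ℤ)+1) * ((r:ℤ)-2-(i:ℤ)) * (-1:ℤ)^(r+i))) * hR3
      · have hb0 : ichoose ((m:ℤ)-(k:ℤ)-(i:ℤ)) (k:ℤ) = 0 := by
          rw [show (m:ℤ)-(k:ℤ)-(i:ℤ) = (k:ℤ)-1 from by linarith]
          exact ichoose_eq_zero (by omega) (by omega)
        have hb1 : ichoose ((m:ℤ)+1-(k:ℤ)-(i:ℤ)) (k:ℤ) = 1 := by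
          rw [show (m:ℤ)+1-(k:ℤ)-(i:ℤ) = (k:ℤ) from by linarith]
          rw [ichoose_natCast, Nat.choose_self, Nat.cast_one]
        rw [hb0, hb1]
        linear_combination (((m:ℤ)+2+(i:ℤ)-(r:ℤ)) * ichoose ((k:ℤ)+(i:ℤ)) (k:ℤ)
          * ichoose (2*(k:ℤ)+1) ((r:ℤ)-(i:ℤ)) * (-1:ℤ)^(r+i)) * hB
    · apply mul_left_cancel₀ (a := (2*(k:ℤ)+2-(r:ℤ)+(i:ℤ)) * ((m:ℤ)+1-2*(k:ℤ)-(i:ℤ)))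
        (mul_ne_zero (by intro hc; exact hA (by linarith)) hB)
      linear_combination
        ((2*(k:ℤ)+2-(r:ℤ)+(i:ℤ)) * (((m:ℤ)+2-r)*((m:ℤ)-2*k+1) + (i:ℤ)*((r:ℤ)-2*k-1-i))
            * ichoose ((k:ℤ)+(i:ℤ)) (k:ℤ) * ichoose (2*(k:ℤ)+1) ((r:ℤ)-(i:ℤ)) * (-1:ℤ)^(r+i)) * hR2
        + (((m:ℤ)+1-2*k-i) * (2*(k:ℤ)+2-(r:ℤ)+(i:ℤ)) * ((r:ℤ)-2*k-2-i) * (-1:ℤ)^(r+i)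
            * ichoose ((m:ℤ)-(k:ℤ)-(i:ℤ)) (k:ℤ) * ichoose (2*(k:ℤ)+1) ((r:ℤ)-(i:ℤ)-1)) * hR1
        + (-(((m:ℤ)+1-2*k-i) * ((r:ℤ)-2*k-2-i) * ((k:ℤ)+i+1) * (-1:ℤ)^(r+i)
            * ichoose ((m:ℤ)-(k:ℤ)-(i:ℤ)) (k:ℤ) * ichoose ((k:ℤ)+(i:ℤ)) (k:ℤ))) * hR3

lemma Fi_third_zero (k r m i : ℕ) (h : (2:ℤ)*k+1 < (r:ℤ)-i) : Fi k r m i = 0 := by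
  simp only [Fi]
  rw [ichoose_eq_zero (by positivity) h]
  ring

lemma Fi_third_neg (k r m i : ℕ) (h : (r:ℤ)-i < 0) : Fi k r m i = 0 := by
  simp only [Fi]
  rw [ichoose_of_neg h]
  ring

lemma Fi_mid_zero (k r m i : ℕ) (hk : 0 < k) (h : (m:ℤ)-k-i = (k:ℤ)-1) : Fi k r m i = 0 := by
  simp only [Fi]
  rw [h, show ichoose ((k:ℤ)-1) (k:ℤ) = 0 from ichoose_eq_zero (by omega) (by omega)]
  ring

lemma main_lemma (k r : ℕ) : ∀ m : ℕ, 2*k ≤ m →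
    (∑ i ∈ range (m - 2*k + 1), Fi k r m i)
    = (-1:ℤ)^(r+m) * ((m+1).choose r : ℤ) * ichoose ((r:ℤ)-k-1) ((m:ℤ)-2*k) := by
  intro m hm
  induction m, hm using Nat.le_induction with
  | base =>
    rw [show 2*k - 2*k + 1 = 1 from by omega, sum_range_one]
    simp only [Fi]
    push_cast
    rw [show (k:ℤ) + 0 = ((k:ℕ):ℤ) from by push_cast; ring,
        show 2*(k:ℤ) - (k:ℤ) - 0 = ((k:ℕ):ℤ) from by push_cast; ring,
        show (r:ℤ) - 0 = ((r:ℕ):ℤ) from by push_cast; ring,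
        show 2*(k:ℤ) + 1 = ((2*k+1 : ℕ):ℤ) from by push_cast; ring,
        show 2*(k:ℤ) - 2*(k:ℤ) = (0:ℤ) from by ring,
        ichoose_natCast, ichoose_natCast, Nat.choose_self, ichoose_zero]
    rw [show (-1:ℤ)^(r+2*k) = (-1)^r * ((-1)^2)^k from by rw [pow_add, pow_mul]]
    norm_num
    ring
  | succ m hm IH =>
    by_cases hr3 : m + 3 ≤ r
    · -- everything vanishes
      rw [Nat.choose_eq_zero_of_lt (by omega : m + 1 + 1 < r)]
      rw [sum_eq_zero]
      · push_cast; ring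
      · intro i hi
        simp only [mem_range] at hi
        exact Fi_third_zero k r (m+1) i (by omega)
    · by_cases hr2 : r = m + 2
      · subst hr2
        rw [sum_eq_single_of_mem (m+1-2*k) (by simp only [mem_range]; omega)]
        · -- evaluate the single surviving term
          simp only [Fi]
          rw [show ((m+1-2*k : ℕ) : ℤ) = (m:ℤ)+1-2*k from by omega,
              show (k:ℤ) + ((m:ℤ)+1-2*k) = (((m+1-k : ℕ)):ℤ) from by push_cast [Nat.cast_sub (by omega : k ≤ m+1)]; ring,
              show ((m+1 : ℕ):ℤ) - (k:ℤ) - ((m:ℤ)+1-2*k) = ((k:ℕ):ℤ) from by push_cast; ring,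
              show ((m+2 : ℕ):ℤ) - ((m:ℤ)+1-2*k) = ((2*k+1 : ℕ):ℤ) from by push_cast; ring,
              show 2*(k:ℤ)+1 = ((2*k+1 : ℕ):ℤ) from by push_cast; ring,
              ichoose_natCast, ichoose_natCast, ichoose_natCast,
              Nat.choose_self, Nat.choose_self]
          rw [show (m+1+1).choose (m+2) = 1 from by
                rw [show m+1+1 = m+2 from rfl, Nat.choose_self],
              show ((m+2:ℕ):ℤ) - (k:ℤ) - 1 = ((m+1-k : ℕ):ℤ) from by omega,
              show ((m+1:ℕ):ℤ) - 2*(k:ℤ) = ((m+1-2*k : ℕ):ℤ) from by omega,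
              ichoose_natCast]
          rw [Odd.neg_one_pow (n := m+2 + (m+1-2*k)) ⟨m - k + 1, by omega⟩,
              Odd.neg_one_pow (n := m+2 + (m+1)) ⟨m + 1, by omega⟩]
          rw [show (m+1-k).choose (m+1-2*k) = (m+1-k).choose k from by
                rw [← Nat.choose_symm (by omega : k ≤ m+1-k),
                    show m+1-k-k = m+1-2*k from by omega]]
          push_cast
          ring
        · intro i hi hne
          simp only [mem_range] at hi
          exact Fi_third_zero k (m+2) (m+1) i (by omega)
      · -- main case : r ≤ m + 1
        have hr : r ≤ m + 1 := by omega
        have hstep : ∀ i : ℕ,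
            ((m:ℤ)+2-r) * ((m:ℤ)-2*k+1) * Fi k r (m+1) i
              + ((m:ℤ)+2) * ((r:ℤ)+k-m-1) * Fi k r m i
            = (((i+1 : ℕ)):ℤ) * ((r:ℤ)-2*(k:ℤ)-1-((i+1:ℕ):ℤ)) * Fi k r (m+1) (i+1)
              - (i:ℤ) * ((r:ℤ)-2*(k:ℤ)-1-(i:ℤ)) * Fi k r (m+1) i := by
          intro i
          have h := cert k r m i
          push_cast
          linear_combination h
        have tel : ∑ i ∈ range (m+2-2*k),
            (((m:ℤ)+2-r) * ((m:ℤ)-2*k+1) * Fi k r (m+1) i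
              + ((m:ℤ)+2) * ((r:ℤ)+k-m-1) * Fi k r m i)
            = (((m+2-2*k : ℕ)):ℤ) * ((r:ℤ)-2*(k:ℤ)-1-((m+2-2*k:ℕ):ℤ)) * Fi k r (m+1) (m+2-2*k)
              - ((0:ℕ):ℤ) * ((r:ℤ)-2*(k:ℤ)-1-((0:ℕ):ℤ)) * Fi k r (m+1) 0 := by
          rw [sum_congr rfl (fun i _ => hstep i)]
          exact Finset.sum_range_sub
            (fun j : ℕ => (j:ℤ) * ((r:ℤ)-2*(k:ℤ)-1-(j:ℤ)) * Fi k r (m+1) j) (m+2-2*k)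
        have hfN : Fi k r (m+1) (m+2-2*k) = 0 := by
          rcases Nat.eq_zero_or_pos k with hk | hk
          · subst hk
            exact Fi_third_neg 0 r (m+1) (m+2-2*0) (by omega)
          · exact Fi_mid_zero k r (m+1) (m+2-2*k) hk (by omega)
        have hδ : ((m:ℤ)+2) * ((r:ℤ)+k-m-1) * Fi k r m (m-2*k+1) = 0 := by
          rcases Nat.eq_zero_or_pos k with hk | hk
          · subst hk
            by_cases hrm : r = m + 1
            · subst hrm
              rw [show ((m+1:ℕ):ℤ)+(0:ℕ)-m-1 = 0 from by push_cast; ring]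
              ring
            · rw [Fi_third_neg 0 r m (m-2*0+1) (by omega)]
              ring
          · rw [Fi_mid_zero k r m (m-2*k+1) hk (by omega)]
            ring
        have key : ((m:ℤ)+2-r) * ((m:ℤ)-2*k+1) * (∑ i ∈ range (m+1-2*k+1), Fi k r (m+1) i)
            + ((m:ℤ)+2) * ((r:ℤ)+k-m-1) * (∑ i ∈ range (m-2*k+1), Fi k r m i) = 0 := by
          have e2 : m+2-2*k = m-2*k+1+1 := by omega
          rw [e2] at tel
          rw [sum_add_distrib, ← mul_sum, ← mul_sum] at tel
          have hfN' : Fi k r (m+1) (m-2*k+1+1) = 0 := by rw [← e2]; exact hfN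
          rw [hfN', Finset.sum_range_succ (f := fun i => Fi k r m i)] at tel
          rw [show m+1-2*k+1 = m-2*k+1+1 from by omega]
          linear_combination tel - hδ
        have h1 : ((m:ℤ)+2-r) * (((m+2).choose r : ℕ):ℤ)
            = ((m:ℤ)+2) * (((m+1).choose r : ℕ):ℤ) := by
          have h := ichoose_shift ((m+2 : ℕ):ℤ) r
          rw [ichoose_natCast,
              show ((m+2:ℕ):ℤ)-1 = ((m+1:ℕ):ℤ) from by push_cast; ring,
              ichoose_natCast] at h
          push_cast at h ⊢
          linear_combination h
        have h2 : ((m:ℤ)-2*k+1) * ichoose ((r:ℤ)-k-1) ((m:ℤ)+1-2*k)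
            = ((r:ℤ)+k-m-1) * ichoose ((r:ℤ)-k-1) ((m:ℤ)-2*k) := by
          have h := ichoose_absorb' ((r:ℤ)-k-1) ((m:ℤ)-2*k+1)
          rw [show (m:ℤ)-2*k+1-1 = (m:ℤ)-2*k from by ring,
              show (r:ℤ)-k-1-((m:ℤ)-2*k+1)+1 = (r:ℤ)+k-m-1 from by ring] at h
          rw [show (m:ℤ)+1-2*(k:ℤ) = (m:ℤ)-2*(k:ℤ)+1 from by ring]
          exact h
        rw [show r+(m+1) = (r+m)+1 from by ring, pow_succ,
            show m+1+1 = m+2 from by omega,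
            show ((m+1:ℕ):ℤ) - 2*(k:ℤ) = (m:ℤ)+1-2*k from by push_cast; ring]
        refine mul_left_cancel₀
          (a := ((m:ℤ)+2-r) * ((m:ℤ)-2*k+1))
          (by
            have : (0:ℤ) < ((m:ℤ)+2-r) * ((m:ℤ)-2*k+1) := by
              apply mul_pos <;> omega
            exact ne_of_gt this) ?_
        linear_combination key
          + (-(((m:ℤ)+2) * ((r:ℤ)+k-m-1))) * IH
          + ((-1:ℤ)^(r+m) * ((m:ℤ)-2*k+1) * ichoose ((r:ℤ)-k-1) ((m:ℤ)+1-2*k)) * h1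
          + ((-1:ℤ)^(r+m) * ((m:ℤ)+2) * (((m+1).choose r : ℕ):ℤ)) * h2


/-- The Pfaff–Saalschütz evaluation of
`∑_i (-1)^{r-i} C(k+i,k) C(m-k-i,k) C(2k+1,r-i)` in closed form. -/
theorem stmt12 (k m r : ℕ) (hkm : k ≤ m) (h : 2 * k ≤ m) :
    ∑ i ∈ range (m - 2 * k + 1),
        ((k + i).choose k : ℤ) * ((m - k - i).choose k : ℤ) *
          ichoose (2 * k + 1) ((r : ℤ) - i) * (-1 : ℤ) ^ (r + i) =
      (-1 : ℤ) ^ (r + m) * ((m + 1).choose r : ℤ) *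
        ichoose ((r : ℤ) - k - 1) ((m : ℤ) - 2 * k) := by
  rw [← main_lemma k r m h]
  apply sum_congr rfl
  intro i hi
  simp only [mem_range] at hi
  simp only [Fi]
  rw [← ichoose_natCast (k+i) k, ← ichoose_natCast (m-k-i) k,
      show ((k+i:ℕ):ℤ) = (k:ℤ)+i from by push_cast; ring,
      show ((m-k-i:ℕ):ℤ) = (m:ℤ)-k-i from by omega]
end
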